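/- arXiv:2207.08258 — 2 statements merged into one kernel-verified Lean document; each statement's English description precedes it below -/
import Mathlib

section
/- For the James-Stein shift γ(x) = −(d−2)x/‖x‖² on ℝ^d \ {0}, one has ‖γ(x)‖² + 2∇·γ(x) = −(d−2)²/‖x‖², which is strictly negative for d > 2 and all x ≠ 0. -/
/-- For the James-Stein shift `γ(x) = −(d−2)x/‖x‖²` on `ℝ^d \ {0}`,
`‖γ(x)‖² + 2∇·γ(x) = −(d−2)²/‖x‖²`, strictly negative for `d > 2` and all `x ≠ 0`. -/
theorem stmt_4 (d : ℕ) (x : EuclideanSpace ℝ (Fin d)) (hx : x ≠ 0)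
    (γ : EuclideanSpace ℝ (Fin d) → EuclideanSpace ℝ (Fin d))
    (hγ : ∀ y, γ y = (-((d : ℝ) - 2) / ‖y‖ ^ 2) • y) :
    ‖γ x‖ ^ 2 +
        2 * ∑ i, fderiv ℝ (fun y => γ y i) x (EuclideanSpace.single i 1)
      = -((d : ℝ) - 2) ^ 2 / ‖x‖ ^ 2 ∧
    (2 < d →
      ‖γ x‖ ^ 2 +
          2 * ∑ i, fderiv ℝ (fun y => γ y i) x (EuclideanSpace.single i 1) < 0) := by
  set c : ℝ := -((d : ℝ) - 2) with hc
  have hxn : ‖x‖ ≠ 0 := norm_ne_zero_iff.mpr hx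
  have hx2 : ‖x‖ ^ 2 ≠ 0 := pow_ne_zero 2 hxn
  -- derivative of each coordinate
  have hderiv : ∀ i : Fin d, fderiv ℝ (fun y => γ y i) x (EuclideanSpace.single i 1)
      = c * (-((‖x‖ ^ 2) ^ 2)⁻¹ * (2 * (x i))) * x i + (c * (‖x‖ ^ 2)⁻¹) * 1 := by
    intro i
    have h1 : HasFDerivAt (fun y : EuclideanSpace ℝ (Fin d) => ‖y‖ ^ 2)
        (2 • (innerSL ℝ x)) x := (hasStrictFDerivAt_norm_sq x).hasFDerivAt
    have h2 := ((hasFDerivAt_inv hx2).comp x h1).const_mul c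
    have h3 := h2.mul (EuclideanSpace.proj (𝕜 := ℝ) i).hasFDerivAt
    have heq : (fun y : EuclideanSpace ℝ (Fin d) => γ y i)
        = fun y => (c * (‖y‖ ^ 2)⁻¹) * (EuclideanSpace.proj (𝕜 := ℝ) i) y := by
      funext y
      simp [hγ, div_eq_mul_inv, PiLp.smul_apply, smul_eq_mul]
    simp only [Function.comp_def] at h3
    rw [heq, show (fun y => c * (‖y‖ ^ 2)⁻¹ * (EuclideanSpace.proj (𝕜 := ℝ) i) y) = (fun y => c * (‖y‖ ^ 2)⁻¹) * ⇑(EuclideanSpace.proj (𝕜 := ℝ) i) from rfl, h3.fderiv]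
    simp [real_inner_comm, mul_comm, mul_assoc, mul_left_comm, smul_eq_mul,
      EuclideanSpace.inner_single_right]
    ring
  have hnormsq : ∑ i, x i * x i = ‖x‖ ^ 2 := by
    rw [← real_inner_self_eq_norm_sq]
    simp only [PiLp.inner_apply, RCLike.inner_apply, conj_trivial, mul_comm]
  have hsum : ∑ i, fderiv ℝ (fun y => γ y i) x (EuclideanSpace.single i 1)
      = c * ((d : ℝ) - 2) * (‖x‖ ^ 2)⁻¹ := by
    simp only [hderiv]
    rw [Finset.sum_add_distrib, Finset.sum_const, Finset.card_univ, Fintype.card_fin]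
    have : ∑ i : Fin d, c * (-((‖x‖ ^ 2) ^ 2)⁻¹ * (2 * (x i))) * x i
        = c * (-((‖x‖ ^ 2) ^ 2)⁻¹ * 2) * ∑ i, x i * x i := by
      rw [Finset.mul_sum]; congr 1; funext i; ring
    rw [this, hnormsq]
    field_simp
    rw [nsmul_eq_mul, mul_left_comm, mul_div_cancel₀ _ hx2]
    ring
  have hγx : ‖γ x‖ ^ 2 = c ^ 2 / ‖x‖ ^ 2 := by
    rw [hγ, norm_smul]
    rw [mul_pow]
    have : |c / ‖x‖ ^ 2| ^ 2 = (c / ‖x‖ ^ 2) ^ 2 := sq_abs _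
    rw [Real.norm_eq_abs, this]
    field_simp
  have hmain : ‖γ x‖ ^ 2 +
      2 * ∑ i, fderiv ℝ (fun y => γ y i) x (EuclideanSpace.single i 1)
      = -((d : ℝ) - 2) ^ 2 / ‖x‖ ^ 2 := by
    rw [hγx, hsum, hc]
    field_simp
    ring
  refine ⟨hmain, fun hd => ?_⟩
  rw [hmain]
  apply div_neg_of_neg_of_pos
  · have : (2 : ℝ) < d := by exact_mod_cast hd
    nlinarith
  · positivity
end

section
/- Let m : ℝ^d → (0, ∞) be twice continuously differentiable. Then −‖∇ log m(x)‖² + 2·Δm(x)/m(x) = 4·Δ√m(x)/√m(x) for all x ∈ ℝ^d. -/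
/-- The Laplacian `Δf(x) = Σᵢ ∂²f/∂xᵢ²` on `ℝ^d`. -/
noncomputable def lap {d : ℕ} (f : EuclideanSpace ℝ (Fin d) → ℝ)
    (x : EuclideanSpace ℝ (Fin d)) : ℝ :=
  ∑ i, iteratedFDeriv ℝ 2 f x ![EuclideanSpace.single i 1, EuclideanSpace.single i 1]

/-- For a strictly positive `C²` function `m : ℝ^d → (0,∞)`,
`−‖∇ log m(x)‖² + 2 Δm(x)/m(x) = 4 Δ√m(x)/√m(x)` for all `x`. -/
theorem stmt_7 (d : ℕ) (m : EuclideanSpace ℝ (Fin d) → ℝ)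
    (hm : ContDiff ℝ 2 m) (hpos : ∀ x, 0 < m x) :
    ∀ x, -‖gradient (fun y => Real.log (m y)) x‖ ^ 2 + 2 * lap m x / m x
      = 4 * lap (fun y => Real.sqrt (m y)) x / Real.sqrt (m x) := by
  intro x
  have hMpos := hpos x
  have hs : (0:ℝ) < Real.sqrt (m x) := Real.sqrt_pos.2 hMpos
  have hss : Real.sqrt (m x) * Real.sqrt (m x) = m x := Real.mul_self_sqrt hMpos.le
  have hdm : ∀ y, HasFDerivAt m (fderiv ℝ m y) y := fun y =>
    ((hm.differentiable (by norm_num)) y).hasFDerivAt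
  -- fderiv of sqrt ∘ m
  have hg : ∀ y, HasFDerivAt (fun y => Real.sqrt (m y))
      ((2 * Real.sqrt (m y))⁻¹ • fderiv ℝ m y) y := fun y => by
    have := (Real.hasDerivAt_sqrt (hpos y).ne').comp_hasFDerivAt y (hdm y)
    exact this.congr_fderiv (by rw [one_div])
  have hfg : (fderiv ℝ fun y => Real.sqrt (m y))
      = fun y => (2 * Real.sqrt (m y))⁻¹ • fderiv ℝ m y := funext fun y => (hg y).fderiv
  -- fderiv of the coefficient
  have hc : HasFDerivAt (fun y => (2 * Real.sqrt (m y))⁻¹)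
      ((-(4 * m x * Real.sqrt (m x))⁻¹) • fderiv ℝ m x) x := by
    have h2 : HasDerivAt (fun t : ℝ => 2 * Real.sqrt t) (2 * (1 / (2 * Real.sqrt (m x)))) (m x) :=
      (Real.hasDerivAt_sqrt hMpos.ne').const_mul 2
    have h3 := h2.inv (by positivity)
    have h4 : HasDerivAt (fun t : ℝ => (2 * Real.sqrt t)⁻¹)
        (-(4 * m x * Real.sqrt (m x))⁻¹) (m x) := by
      refine h3.congr_deriv ?_
      have h5 : (2 * Real.sqrt (m x)) ^ 2 = 4 * m x := by
        rw [mul_pow, Real.sq_sqrt hMpos.le]; ring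
      rw [h5]
      have h6 : Real.sqrt (m x) ≠ 0 := hs.ne'
      field_simp
    exact h4.comp_hasFDerivAt x (hdm x)
  have hF : HasFDerivAt (fderiv ℝ m) (fderiv ℝ (fderiv ℝ m) x) x :=
    (((hm.fderiv_right (m := 1) (by norm_num)).differentiable (by norm_num)) x).hasFDerivAt
  have hgg : HasFDerivAt (fderiv ℝ fun y => Real.sqrt (m y))
      ((2 * Real.sqrt (m x))⁻¹ • fderiv ℝ (fderiv ℝ m) x +
        (((-(4 * m x * Real.sqrt (m x))⁻¹) • fderiv ℝ m x).smulRight (fderiv ℝ m x))) x := by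
    rw [hfg]; exact hc.smul hF
  set a : Fin d → ℝ := fun i => fderiv ℝ m x (EuclideanSpace.single i 1) with ha
  set b : Fin d → ℝ := fun i =>
    fderiv ℝ (fderiv ℝ m) x (EuclideanSpace.single i 1) (EuclideanSpace.single i 1) with hb
  have hlapm : lap m x = ∑ i, b i := by
    unfold lap
    refine Finset.sum_congr rfl fun i _ => ?_
    rw [iteratedFDeriv_two_apply]
    simp [hb]
  have hlapg : lap (fun y => Real.sqrt (m y)) x
      = ∑ i, ((2 * Real.sqrt (m x))⁻¹ * b i + (-(4 * m x * Real.sqrt (m x))⁻¹ * a i) * a i) := by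
    unfold lap
    refine Finset.sum_congr rfl fun i _ => ?_
    rw [iteratedFDeriv_two_apply, hgg.fderiv]
    simp [ha, hb]
  -- gradient of log
  have hlog : HasFDerivAt (fun y => Real.log (m y)) ((m x)⁻¹ • fderiv ℝ m x) x := by
    have := (Real.hasDerivAt_log hMpos.ne').comp_hasFDerivAt x (hdm x)
    exact this
  have hgradi : ∀ i, gradient (fun y => Real.log (m y)) x i = (m x)⁻¹ * a i := by
    intro i
    have h1 : inner ℝ (gradient (fun y => Real.log (m y)) x) (EuclideanSpace.single i (1:ℝ))
        = fderiv ℝ (fun y => Real.log (m y)) x (EuclideanSpace.single i 1) := by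
      unfold gradient; rw [InnerProductSpace.toDual_symm_apply]
    rw [hlog.fderiv] at h1
    rw [real_inner_comm, EuclideanSpace.inner_single_left] at h1
    simpa [ha] using h1
  have hgrad : ‖gradient (fun y => Real.log (m y)) x‖ ^ 2 = ∑ i, ((m x)⁻¹ * a i) ^ 2 := by
    rw [EuclideanSpace.norm_eq, Real.sq_sqrt (by positivity)]
    exact Finset.sum_congr rfl fun i _ => by rw [hgradi i, Real.norm_eq_abs, sq_abs]
  rw [hgrad, hlapm, hlapg]
  rw [Finset.sum_add_distrib]
  simp_rw [mul_pow, mul_assoc, ← sq]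
  rw [← Finset.mul_sum, ← Finset.mul_sum, ← Finset.mul_sum]
  set A := ∑ i, (a i) ^ 2
  set B := ∑ i, b i
  set s := Real.sqrt (m x) with hsdef
  rw [← hss]
  have h6 : s ≠ 0 := hs.ne'
  field_simp
  ring
end
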